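/- Let S be a completely positive linear map from operators on H_out ⊗ H_in to operators on K_out ⊗ K_in. Then S sends Choi operators of channels to Choi operators of channels if and only if there exists a completely positive unital map N : End(H_in) → End(K_in) such that Tr_{K_out}[S(E)] = N(Tr_{H_out}[E]) for every operator E on H_out ⊗ H_in. -/

import Mathlib

open Matrix Kronecker BigOperators ComplexOrder

/-- Partial trace over the first tensor factor. -/
noncomputable def ptrFst {o i : Type*} [Fintype o] (M : Matrix (o × i) (o × i) ℂ) :
    Matrix i i ℂ :=
  Matrix.of fun a b => ∑ k, M (k, a) (k, b)

/-- Partial trace over the second tensor factor. -/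
noncomputable def ptrSnd {o i : Type*} [Fintype i] (M : Matrix (o × i) (o × i) ℂ) :
    Matrix o o ℂ :=
  Matrix.of fun a b => ∑ k, M (a, k) (b, k)

/-- Choi operator of a linear map between matrix algebras. -/
noncomputable def choi {i o : Type*} [Fintype i] [DecidableEq i]
    (E : Matrix i i ℂ →ₗ[ℂ] Matrix o o ℂ) : Matrix (o × i) (o × i) ℂ :=
  ∑ m, ∑ n, (E (Matrix.single m n 1)) ⊗ₖ (Matrix.single m n 1)

/-- Complete positivity, expressed via existence of a Kraus decomposition
(equivalent to the usual definition in finite dimensions). -/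
def IsCP {i o : Type*} [Fintype i] [Fintype o]
    (E : Matrix i i ℂ →ₗ[ℂ] Matrix o o ℂ) : Prop :=
  ∃ (k : ℕ) (K : Fin k → Matrix o i ℂ), ∀ X, E X = ∑ j, K j * X * (K j)ᴴ


section aux
variable {o i : Type*} [Fintype o] [Fintype i]

lemma ptrFst_add (M N : Matrix (o × i) (o × i) ℂ) :
    ptrFst (M + N) = ptrFst M + ptrFst N := by
  ext a b; simp [ptrFst, Finset.sum_add_distrib]

lemma ptrFst_smul (c : ℂ) (M : Matrix (o × i) (o × i) ℂ) :
    ptrFst (c • M) = c • ptrFst M := by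
  ext a b; simp [ptrFst, Finset.mul_sum]

lemma ptrFst_sub (M N : Matrix (o × i) (o × i) ℂ) :
    ptrFst (M - N) = ptrFst M - ptrFst N := by
  ext a b; simp [ptrFst, Finset.sum_sub_distrib]

lemma ptrFst_kronecker [DecidableEq o] (X : Matrix i i ℂ) :
    ptrFst ((1 : Matrix o o ℂ) ⊗ₖ X) = (Fintype.card o : ℂ) • X := by
  ext a b
  simp [ptrFst, Matrix.kroneckerMap_apply, Matrix.one_apply]

lemma ptrFst_one [DecidableEq o] [DecidableEq i] :
    ptrFst (1 : Matrix (o × i) (o × i) ℂ) = (Fintype.card o : ℂ) • 1 := by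
  rw [← Matrix.one_kronecker_one (α := ℂ), ptrFst_kronecker]

lemma ptrFst_isHermitian {M : Matrix (o × i) (o × i) ℂ} (h : M.IsHermitian) :
    (ptrFst M).IsHermitian := by
  ext a b
  simp only [ptrFst, conjTranspose_apply, of_apply, star_sum]
  exact Finset.sum_congr rfl fun k _ => congrFun (congrFun h (k, a)) (k, b)

end aux

lemma exists_shift_posSemidef {n : Type*} [Fintype n] [DecidableEq n]
    {E : Matrix n n ℂ} (hE : E.IsHermitian) :
    ∃ c : ℝ, 0 < c ∧ (E + (c : ℂ) • 1).PosSemidef := by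
  refine ⟨(∑ j, |hE.eigenvalues j|) + 1, by positivity, ?_⟩
  set c : ℝ := (∑ j, |hE.eigenvalues j|) + 1 with hc
  set U : Matrix n n ℂ := (hE.eigenvectorUnitary : Matrix n n ℂ) with hU
  have hdiag : E + (c : ℂ) • 1 =
      U * (Matrix.diagonal fun j => ((hE.eigenvalues j + c : ℝ) : ℂ)) * Uᴴ := by
    have h1 : U * ((c : ℂ) • 1) * Uᴴ = (c : ℂ) • 1 := by
      have hUU : U * Uᴴ = 1 := by
        simpa [Matrix.star_eq_conjTranspose] using hE.eigenvectorUnitary.prop.2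
      rw [Matrix.mul_smul, Matrix.smul_mul, Matrix.mul_one, hUU]
    calc E + (c : ℂ) • 1
        = U * Matrix.diagonal (RCLike.ofReal ∘ hE.eigenvalues) * Uᴴ
          + U * ((c : ℂ) • 1) * Uᴴ := by
          rw [h1]; congr 1; exact hE.spectral_theorem
      _ = U * (Matrix.diagonal (RCLike.ofReal ∘ hE.eigenvalues) + (c : ℂ) • 1) * Uᴴ := by
          rw [Matrix.mul_add, Matrix.add_mul]
      _ = _ := by
          have hd : Matrix.diagonal (RCLike.ofReal ∘ hE.eigenvalues) + ((c : ℂ) • 1 : Matrix n n ℂ)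
              = Matrix.diagonal fun j => ((hE.eigenvalues j + c : ℝ) : ℂ) := by
            rw [Matrix.smul_one_eq_diagonal, Matrix.diagonal_add]
            congr 1
            funext j
            push_cast
            simp
          rw [hd]
  rw [hdiag]
  refine Matrix.PosSemidef.mul_mul_conjTranspose_same ?_ U
  refine Matrix.PosSemidef.diagonal fun j => ?_
  simp only [Pi.zero_apply]
  rw [Complex.zero_le_real]
  have : |hE.eigenvalues j| ≤ ∑ k, |hE.eigenvalues k| :=
    Finset.single_le_sum (f := fun k => |hE.eigenvalues k|) (fun k _ => abs_nonneg _) (Finset.mem_univ j)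
  have := neg_abs_le (hE.eigenvalues j)
  linarith

section emb
variable {o i ko ki : Type*} [Fintype o] [DecidableEq o] [Fintype i] [DecidableEq i]
  [Fintype ko] [DecidableEq ko] [Fintype ki] [DecidableEq ki]

noncomputable def embA (m : o) : Matrix (o × i) i ℂ :=
  Matrix.of fun p b => if p = (m, b) then 1 else 0

noncomputable def embB (k : ko) : Matrix ki (ko × ki) ℂ :=
  Matrix.of fun a q => if q = (k, a) then 1 else 0

lemma sum_embA (X : Matrix i i ℂ) :
    ∑ m : o, embA (i := i) m * X * (embA (i := i) m)ᴴ = (1 : Matrix o o ℂ) ⊗ₖ X := by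
  ext p q
  simp [Matrix.sum_apply, Matrix.mul_apply, embA, Matrix.conjTranspose_apply,
    Matrix.kroneckerMap_apply, Matrix.one_apply, Prod.ext_iff, Finset.sum_ite_eq,
    apply_ite, ite_and, Fintype.sum_prod_type]
  split <;> tauto

lemma sum_embB (Z : Matrix (ko × ki) (ko × ki) ℂ) :
    ∑ k : ko, embB (ki := ki) k * Z * (embB (ki := ki) k)ᴴ = ptrFst Z := by
  ext a b
  simp [Matrix.sum_apply, Matrix.mul_apply, embB, Matrix.conjTranspose_apply, ptrFst,
    Prod.ext_iff, Finset.sum_ite_eq, apply_ite, ite_and, Fintype.sum_prod_type]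

lemma sandwich_sum {ι α β : Type*} [Fintype ι] [Fintype β] (M : Matrix α β ℂ)
    (f : ι → Matrix β β ℂ)
    (P : Matrix β α ℂ) : ∑ x : ι, M * f x * P = M * (∑ x : ι, f x) * P := by
  rw [Matrix.mul_sum, Matrix.sum_mul]

end emb

open ComplexStarModule

lemma posSemidef_real_smul {n : Type*} [Fintype n] {M : Matrix n n ℂ} (hM : M.PosSemidef)
    {c : ℝ} (hc : 0 ≤ c) : ((c : ℂ) • M).PosSemidef := by
  constructor
  · have : ((c : ℂ) • M)ᴴ = star (c : ℂ) • Mᴴ := Matrix.conjTranspose_smul _ _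
    rw [Matrix.IsHermitian, this, hM.1]
    simp
  · intro x
    have hx : (x.sum fun i xi => x.sum fun j xj => star xi * ((c : ℂ) • M) i j * xj)
        = (c : ℂ) * (x.sum fun i xi => x.sum fun j xj => star xi * M i j * xj) := by
      simp only [Finsupp.sum, Finset.mul_sum, Matrix.smul_apply, smul_eq_mul]
      exact Finset.sum_congr rfl fun _ _ => Finset.sum_congr rfl fun _ _ => by ring
    have h0 : (0 : ℂ) ≤ (c : ℂ) := by exact_mod_cast Complex.zero_le_real.mpr hc
    rw [hx]
    exact mul_nonneg h0 (hM.2 x)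

lemma isHermitian_one_kronecker {o i : Type*} [Fintype o] [DecidableEq o] [Fintype i]
    {H : Matrix i i ℂ} (hH : H.IsHermitian) :
    ((1 : Matrix o o ℂ) ⊗ₖ H).IsHermitian := by
  ext p q
  simp only [Matrix.conjTranspose_apply, Matrix.kroneckerMap_apply, Matrix.one_apply]
  rw [star_mul']
  have h2 : star (H q.2 p.2) = H p.2 q.2 := congrFun (congrFun hH p.2) q.2
  rw [h2]
  congr 1
  simp only [apply_ite (star : ℂ → ℂ), star_one, star_zero]
  simp [eq_comm]

/-- A CP supermap `S` is deterministic iff there is a CP unital map `N`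
with `Tr_{K_out}[S(E)] = N(Tr_{H_out}[E])` for every `E`. -/
theorem deterministic_iff_effect_map {i o ki ko : Type*}
    [Fintype i] [DecidableEq i] [Fintype o] [DecidableEq o] [Nonempty o]
    [Fintype ki] [DecidableEq ki] [Fintype ko] [DecidableEq ko] [Nonempty ko]
    (S : Matrix (o × i) (o × i) ℂ →ₗ[ℂ] Matrix (ko × ki) (ko × ki) ℂ)
    (hS : IsCP S) :
    (∀ E : Matrix (o × i) (o × i) ℂ, E.PosSemidef → ptrFst E = 1 →
        ptrFst (S E) = 1) ↔
    (∃ N : Matrix i i ℂ →ₗ[ℂ] Matrix ki ki ℂ, IsCP N ∧ N 1 = 1 ∧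
      ∀ E : Matrix (o × i) (o × i) ℂ, ptrFst (S E) = N (ptrFst E)) := by
  constructor
  · intro h
    obtain ⟨n, K, hK⟩ := hS
    set no : ℂ := (Fintype.card o : ℂ) with hno
    have hnoR : (0:ℝ) < (Fintype.card o : ℝ) := by
      exact_mod_cast Fintype.card_pos
    have hno0 : no ≠ 0 := by
      simp [hno, Fintype.card_ne_zero]
    -- the candidate map N
    set N : Matrix i i ℂ →ₗ[ℂ] Matrix ki ki ℂ :=
    { toFun := fun X => no⁻¹ • ptrFst (S ((1 : Matrix o o ℂ) ⊗ₖ X))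
      map_add' := by
        intro X Y
        rw [Matrix.kronecker_add, map_add, ptrFst_add, smul_add]
      map_smul' := by
        intro c X
        rw [Matrix.kronecker_smul, _root_.map_smul, ptrFst_smul, smul_comm,
          RingHom.id_apply] } with hN
    have hNapp : ∀ X, N X = no⁻¹ • ptrFst (S ((1 : Matrix o o ℂ) ⊗ₖ X)) := fun X => rfl
    -- the maximally mixed Choi operator
    have hGpsd : (no⁻¹ • (1 : Matrix (o × i) (o × i) ℂ)).PosSemidef := by
      have : ((((Fintype.card o : ℝ))⁻¹ : ℝ) : ℂ) = no⁻¹ := by push_cast [hno]; simp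
      rw [← this]
      exact posSemidef_real_smul Matrix.PosSemidef.one (by positivity)
    have hGptr : ptrFst (no⁻¹ • (1 : Matrix (o × i) (o × i) ℂ)) = 1 := by
      rw [ptrFst_smul, ptrFst_one, smul_smul, ← hno, inv_mul_cancel₀ hno0, one_smul]
    have hG : ptrFst (S (no⁻¹ • 1)) = 1 := h _ hGpsd hGptr
    -- trace-zero Hermitian operators are annihilated
    have hzero : ∀ E : Matrix (o × i) (o × i) ℂ, E.IsHermitian → ptrFst E = 0 →
        ptrFst (S E) = 0 := by
      intro E hE hptr
      obtain ⟨c, hcpos, hcPSD⟩ := exists_shift_posSemidef hE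
      set t : ℂ := (c : ℂ) * no with ht
      have ht0 : t ≠ 0 := mul_ne_zero (by exact_mod_cast hcpos.ne') hno0
      have hFpsd : (t⁻¹ • (E + (c : ℂ) • 1)).PosSemidef := by
        have : ((((c * (Fintype.card o : ℝ))⁻¹ : ℝ)) : ℂ) = t⁻¹ := by
          push_cast [ht, hno]; simp
        rw [← this]
        exact posSemidef_real_smul hcPSD (by positivity)
      have hFptr : ptrFst (t⁻¹ • (E + (c : ℂ) • 1)) = 1 := by
        rw [ptrFst_smul, ptrFst_add, hptr, ptrFst_smul, ptrFst_one, zero_add,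
          smul_smul, smul_smul, ← hno, mul_assoc, ← ht, inv_mul_cancel₀ ht0, one_smul]
      have hF := h _ hFpsd hFptr
      have hdecomp : E = t • (t⁻¹ • (E + (c : ℂ) • 1)) - t • (no⁻¹ • 1) := by
        rw [smul_smul, mul_inv_cancel₀ ht0, one_smul, smul_smul, ht,
          mul_assoc, mul_inv_cancel₀ hno0, mul_one]
        abel
      have hF2 : t⁻¹ • ptrFst (S (E + (c : ℂ) • 1)) = 1 := by
        rw [← ptrFst_smul, ← _root_.map_smul]; exact hF
      have hG2 : no⁻¹ • ptrFst (S (1 : Matrix (o × i) (o × i) ℂ)) = 1 := by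
        rw [← ptrFst_smul, ← _root_.map_smul]; exact hG
      conv_lhs => rw [hdecomp]
      simp only [map_sub, _root_.map_smul, ptrFst_sub, ptrFst_smul]
      rw [hF2, hG2, sub_self]
    -- key identity, first for Hermitian operators
    have hherm : ∀ E : Matrix (o × i) (o × i) ℂ, E.IsHermitian →
        ptrFst (S E) = N (ptrFst E) := by
      intro E hE
      set E' : Matrix (o × i) (o × i) ℂ :=
        E - no⁻¹ • ((1 : Matrix o o ℂ) ⊗ₖ ptrFst E) with hE'
      have h1 : E'.IsHermitian := by
        refine hE.sub ?_
        have hk := isHermitian_one_kronecker (o := o) (ptrFst_isHermitian hE)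
        have : (no⁻¹ • ((1 : Matrix o o ℂ) ⊗ₖ ptrFst E))ᴴ
            = star no⁻¹ • ((1 : Matrix o o ℂ) ⊗ₖ ptrFst E)ᴴ := Matrix.conjTranspose_smul _ _
        rw [Matrix.IsHermitian, this, hk]
        congr 1
        simp [hno]
      have h2 : ptrFst E' = 0 := by
        rw [hE', ptrFst_sub, ptrFst_smul, ptrFst_kronecker, smul_smul, ← hno,
          inv_mul_cancel₀ hno0, one_smul, sub_self]
      have h3 := hzero _ h1 h2
      rw [hE', map_sub, _root_.map_smul, ptrFst_sub, ptrFst_smul, sub_eq_zero] at h3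
      rw [h3, hNapp]
    refine ⟨N, ?_, ?_, ?_⟩
    · -- IsCP N
      refine ⟨Fintype.card (ko × Fin n × o), fun j =>
        (((Real.sqrt (Fintype.card o))⁻¹ : ℝ) : ℂ) •
          (embB (ki := ki) ((Fintype.equivFin (ko × Fin n × o)).symm j).1 *
            K ((Fintype.equivFin (ko × Fin n × o)).symm j).2.1 *
            embA (i := i) ((Fintype.equivFin (ko × Fin n × o)).symm j).2.2), fun X => ?_⟩
      set r : ℂ := (((Real.sqrt (Fintype.card o))⁻¹ : ℝ) : ℂ) with hr
      have hrr : r * star r = no⁻¹ := by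
        rw [hr, Complex.star_def, Complex.conj_ofReal, ← Complex.ofReal_mul, ← mul_inv,
          Real.mul_self_sqrt (Nat.cast_nonneg _), hno]
        push_cast
        ring
      set C : ko × Fin n × o → Matrix ki i ℂ := fun t =>
        embB (ki := ki) t.1 * K t.2.1 * embA (i := i) t.2.2 with hC
      have hsum : ∀ t : ko × Fin n × o,
          (r • C t) * X * (r • C t)ᴴ = no⁻¹ • (C t * X * (C t)ᴴ) := by
        intro t
        rw [Matrix.conjTranspose_smul, Matrix.smul_mul, Matrix.smul_mul, Matrix.mul_smul,
          smul_smul, hrr]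
      have key : ∀ (k : ko) (j : Fin n),
          ∑ m : o, C (k, j, m) * X * (C (k, j, m))ᴴ
            = embB (ki := ki) k * (K j * ((1 : Matrix o o ℂ) ⊗ₖ X) * (K j)ᴴ) * (embB (ki := ki) k)ᴴ := by
        intro k j
        have e1 : ∀ m : o, C (k, j, m) * X * (C (k, j, m))ᴴ
            = (embB (ki := ki) k * K j) * (embA (i := i) m * X * (embA (i := i) m)ᴴ) *
              (embB (ki := ki) k * K j)ᴴ := by
          intro m
          show (embB (ki := ki) k * K j * embA (i := i) m) * X * (embB (ki := ki) k * K j * embA (i := i) m)ᴴ = _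
          simp only [Matrix.conjTranspose_mul, Matrix.mul_assoc]
        rw [Finset.sum_congr rfl fun m _ => e1 m, sandwich_sum, sum_embA]
        simp only [Matrix.conjTranspose_mul, Matrix.mul_assoc]
      have hmain : ∑ t : ko × Fin n × o, C t * X * (C t)ᴴ
          = ptrFst (S ((1 : Matrix o o ℂ) ⊗ₖ X)) := by
        rw [Fintype.sum_prod_type]
        have hper : ∀ k : ko, ∑ p : Fin n × o, C (k, p) * X * (C (k, p))ᴴ
            = embB (ki := ki) k * S ((1 : Matrix o o ℂ) ⊗ₖ X) * (embB (ki := ki) k)ᴴ := by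
          intro k
          rw [Fintype.sum_prod_type]
          calc ∑ j, ∑ m, C (k, j, m) * X * (C (k, j, m))ᴴ
              = ∑ j, embB (ki := ki) k * (K j * ((1 : Matrix o o ℂ) ⊗ₖ X) * (K j)ᴴ) * (embB (ki := ki) k)ᴴ :=
                Finset.sum_congr rfl fun j _ => key k j
            _ = embB (ki := ki) k * (∑ j, K j * ((1 : Matrix o o ℂ) ⊗ₖ X) * (K j)ᴴ) * (embB (ki := ki) k)ᴴ :=
                sandwich_sum _ _ _
            _ = _ := by rw [← hK]
        rw [Finset.sum_congr rfl fun k _ => hper k, sum_embB]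
      calc N X = no⁻¹ • ptrFst (S ((1 : Matrix o o ℂ) ⊗ₖ X)) := hNapp X
        _ = no⁻¹ • ∑ t : ko × Fin n × o, C t * X * (C t)ᴴ := by rw [hmain]
        _ = ∑ t : ko × Fin n × o, (r • C t) * X * (r • C t)ᴴ := by
            rw [Finset.smul_sum]
            exact (Finset.sum_congr rfl fun t _ => (hsum t).symm)
        _ = _ := by
            rw [← Equiv.sum_comp (Fintype.equivFin (ko × Fin n × o)).symm
              (fun t => (r • C t) * X * (r • C t)ᴴ)]
    · -- N 1 = 1
      rw [hNapp, Matrix.one_kronecker_one, ← ptrFst_smul, ← _root_.map_smul]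
      exact hG
    · -- the intertwining identity
      intro E
      have hd := realPart_add_I_smul_imaginaryPart E
      conv_lhs => rw [← hd]
      conv_rhs => rw [← hd]
      have hsa1 : (ℜ E : Matrix (o × i) (o × i) ℂ).IsHermitian := by
        rw [Matrix.IsHermitian, ← Matrix.star_eq_conjTranspose]
        exact (ℜ E).prop.star_eq
      have hsa2 : (ℑ E : Matrix (o × i) (o × i) ℂ).IsHermitian := by
        rw [Matrix.IsHermitian, ← Matrix.star_eq_conjTranspose]
        exact (ℑ E).prop.star_eq
      rw [map_add, _root_.map_smul, ptrFst_add, ptrFst_smul, hherm _ hsa1, hherm _ hsa2,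
        ptrFst_add, ptrFst_smul, map_add, _root_.map_smul]
  · rintro ⟨N, _, hN1, hNeq⟩ E _ hptr
    rw [hNeq, hptr, hN1]
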